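/- Let X be a finite connected rack, x₀ ∈ X, n the common order of the permutations L_x, N the normal closure of {g_{x₀}^n} in As(X), and G̅_X = As(X)/N the finite enveloping group. Let (V, ρ) be a strong representation of X. Then there is a group homomorphism ρ̄ : G̅_X → GL(V) such that ρ̄(g_x·N) = ρ_x for all x ∈ X. Furthermore, if ρ is an irreducible rack representation, then ρ̄ is an irreducible group representation. -/
import Mathlib

open Quandles

/-- Let `X` be a finite connected rack, `x₀ ∈ X`, `n` the (common) order
of the permutations `L_x`, `N` the normal closure of `{g_{x₀}^n}` in `As(X)`, and
`G̅_X = As(X)/N` the finite enveloping group. Every strong representation `(V, ρ)` of `X`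
induces a group homomorphism `ρ̄ : G̅_X →* GL(V)` with `ρ̄(g_x · N) = ρ_x` for all `x`;
moreover if `ρ` is irreducible as a rack representation then `ρ̄` is irreducible as a
group representation. -/
theorem strong_rep_induces_rep_of_finite_envelGroup (X : Type*) [Rack X] [Fintype X]
    (hconn : ∀ x y : X, ∃ φ ∈ Subgroup.closure
      (Set.range (fun x : X => (Rack.act' x : Equiv.Perm X))), φ x = y)
    (x₀ : X)
    (V : Type*) [AddCommGroup V] [Module ℂ V]
    (ρ : X → (V ≃ₗ[ℂ] V)) (hρ : ∀ x y : X, ρ (x ◃ y) = ρ x * ρ y * (ρ x)⁻¹)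
    (hstrong : ∀ l : List X,
      (l.map (fun x => (Rack.act' x : Equiv.Perm X))).prod = 1 → (l.map ρ).prod = 1) :
    ∃ ρbar : (Rack.EnvelGroup X ⧸ Subgroup.normalClosure
        {(Rack.toEnvelGroup X x₀ : Rack.EnvelGroup X)
          ^ orderOf (Rack.act' x₀ : Equiv.Perm X)}) →* (V ≃ₗ[ℂ] V),
      (∀ x : X,
        ρbar (QuotientGroup.mk (Rack.toEnvelGroup X x : Rack.EnvelGroup X)) = ρ x) ∧
      ((∀ W : Submodule ℂ V, (∀ x : X, ∀ w ∈ W, ρ x w ∈ W) → W = ⊥ ∨ W = ⊤) →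
        (∀ W : Submodule ℂ V, (∀ h, ∀ w ∈ W, ρbar h w ∈ W) → W = ⊥ ∨ W = ⊤)) := by
  set n := orderOf (Rack.act' x₀ : Equiv.Perm X) with hn
  -- the shelf hom
  let f : X →◃ Quandle.Conj (V ≃ₗ[ℂ] V) := ⟨ρ, fun {x y} => hρ x y⟩
  let φ : Rack.EnvelGroup X →* (V ≃ₗ[ℂ] V) := Rack.toEnvelGroup.map f
  have hφx : ∀ x : X, φ (Rack.toEnvelGroup X x) = ρ x := fun x => rfl
  have hgen : φ ((Rack.toEnvelGroup X x₀ : Rack.EnvelGroup X) ^ n) = 1 := by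
    rw [map_pow, hφx]
    have := hstrong (List.replicate n x₀) ?_
    · simpa [List.map_replicate, List.prod_replicate] using this
    · simp only [List.map_replicate, List.prod_replicate]
      exact pow_orderOf_eq_one _
  have hle : Subgroup.normalClosure
      {(Rack.toEnvelGroup X x₀ : Rack.EnvelGroup X) ^ n} ≤ φ.ker := by
    apply Subgroup.normalClosure_le_normal
    intro g hg
    rw [Set.mem_singleton_iff] at hg
    subst hg
    exact hgen
  refine ⟨QuotientGroup.lift _ φ hle, fun x => hφx x, ?_⟩
  intro hirr W hW
  apply hirr
  intro x w hw
  have := hW (QuotientGroup.mk (Rack.toEnvelGroup X x)) w hw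
  simpa [hφx] using this
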